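/- For every integer k ≥ 2, (k + 1/2) ζ(2k) = ∑_{m=1}^{k-1} ζ(2m) ζ(2k-2m). -/

import Mathlib

open PowerSeries Nat

lemma deriv_exp_ps : d⁄dX ℚ (PowerSeries.exp ℚ) = PowerSeries.exp ℚ := by
  ext n
  rw [PowerSeries.coeff_derivative, PowerSeries.coeff_exp, PowerSeries.coeff_exp]
  simp only [eq_ratCast, Rat.cast_div, Rat.cast_one, Rat.cast_natCast]
  rw [Nat.factorial_succ]
  push_cast
  field_simp

lemma bps_sq : (bernoulliPowerSeries ℚ) ^ 2 =
    bernoulliPowerSeries ℚ - X * bernoulliPowerSeries ℚ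
      - X * d⁄dX ℚ (bernoulliPowerSeries ℚ) := by
  set B := bernoulliPowerSeries ℚ with hB
  set E := PowerSeries.exp ℚ - 1 with hE
  have h1 : B * E = X := bernoulliPowerSeries_mul_exp_sub_one ℚ
  have hdE : d⁄dX ℚ E = E + 1 := by
    rw [hE, map_sub, deriv_exp_ps]
    simp
  have h2 : d⁄dX ℚ (B * E) = 1 := by rw [h1, derivative_X]
  rw [Derivation.leibniz, smul_eq_mul, smul_eq_mul, hdE] at h2
  have hEne : E ≠ 0 := by
    intro h
    have := congrArg (coeff 1) h
    simp [hE, PowerSeries.coeff_exp] at this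
  have key : E * (B ^ 2 - (B - X * B - X * d⁄dX ℚ B)) = 0 := by
    have h3 : X * (B * (E + 1) + E * d⁄dX ℚ B) = X * 1 := by rw [h2]
    calc E * (B ^ 2 - (B - X * B - X * d⁄dX ℚ B))
        = B * (B * E) + X * (B * (E + 1) + E * d⁄dX ℚ B) - B * E - X * B := by ring
      _ = B * X + X * 1 - X - X * B := by rw [h1, h3]
      _ = 0 := by ring
  have := mul_eq_zero.mp key
  rcases this with h | h
  · exact absurd h hEne
  · exact sub_eq_zero.mp h

lemma coeff_bps (n : ℕ) : coeff n (bernoulliPowerSeries ℚ) = bernoulli n / n ! := by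
  simp [bernoulliPowerSeries, coeff_mk]

lemma coeff_id (n : ℕ) :
    ∑ m ∈ Finset.range (n + 2),
        bernoulli m / (m ! : ℚ) * (bernoulli (n + 1 - m) / ((n + 1 - m)! : ℚ)) =
      bernoulli (n + 1) / ((n + 1)! : ℚ) - bernoulli n / (n ! : ℚ)
        - ((n : ℚ) + 1) * (bernoulli (n + 1) / ((n + 1)! : ℚ)) := by
  have h := congrArg (coeff (n + 1)) bps_sq
  rw [sq, PowerSeries.coeff_mul, map_sub, map_sub, PowerSeries.coeff_succ_X_mul,
    PowerSeries.coeff_succ_X_mul, PowerSeries.coeff_derivative,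
    Finset.Nat.sum_antidiagonal_eq_sum_range_succ_mk] at h
  simp only [coeff_bps] at h
  rw [h]; ring

lemma even_sum {M : Type*} [AddCommMonoid M] (g : ℕ → M) (h : ∀ m, Odd m → g m = 0) (N : ℕ) :
    ∑ m ∈ Finset.range (2 * N + 1), g m = ∑ j ∈ Finset.range (N + 1), g (2 * j) := by
  induction N with
  | zero => simp
  | succ N ih =>
    have e : 2 * (N + 1) + 1 = (2 * N + 1) + 1 + 1 := by ring
    rw [e, Finset.sum_range_succ, Finset.sum_range_succ, ih,
      Finset.sum_range_succ (f := fun j => g (2 * j)) (n := N + 1),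
      h (2 * N + 1) ⟨N, by ring⟩, add_zero]
    have : 2 * (N + 1) = 2 * N + 2 := by ring
    rw [this]

lemma bern_odd {n : ℕ} (h1 : Odd n) (h2 : 1 < n) : bernoulli n = 0 := by
  rw [bernoulli_eq_bernoulli'_of_ne_one (by omega), bernoulli'_eq_zero_of_odd h1 h2]

lemma key (k : ℕ) (hk : 2 ≤ k) :
    ∑ m ∈ Finset.Ico 1 k,
        bernoulli (2 * m) / ((2 * m)! : ℚ) * (bernoulli (2 * k - 2 * m) / ((2 * k - 2 * m)! : ℚ)) =
      -(2 * (k : ℚ) + 1) * (bernoulli (2 * k) / ((2 * k)! : ℚ)) := by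
  set g : ℕ → ℚ := fun m => bernoulli m / (m ! : ℚ) * (bernoulli (2 * k - m) / ((2 * k - m)! : ℚ))
    with hg
  have hodd : ∀ m, Odd m → g m = 0 := by
    intro m hm
    rcases eq_or_ne m 1 with rfl | hne
    · have : bernoulli (2 * k - 1) = 0 := bern_odd ⟨k - 1, by omega⟩ (by omega)
      simp [hg, this]
    · have : bernoulli m = 0 := bern_odd hm (by rcases hm with ⟨j, rfl⟩; omega)
      simp [hg, this]
  have h1 : ∑ m ∈ Finset.range (2 * k + 1), g m = ∑ j ∈ Finset.range (k + 1), g (2 * j) :=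
    even_sum g hodd k
  have h2 := coeff_id (2 * k - 1)
  have e1 : 2 * k - 1 + 1 = 2 * k := by omega
  have e2 : 2 * k - 1 + 2 = 2 * k + 1 := by omega
  rw [e1, e2] at h2
  have hb : bernoulli (2 * k - 1) = 0 := bern_odd ⟨k - 1, by omega⟩ (by omega)
  rw [hb] at h2
  have hcast : ((2 * k - 1 : ℕ) : ℚ) + 1 = 2 * (k : ℚ) := by
    push_cast [Nat.cast_sub (by omega : 1 ≤ 2 * k)]; ring
  rw [hcast] at h2
  -- h2 : ∑ m ∈ range (2k+1), g' m = B/(2k)! - 0 - 2k * (B/(2k)!)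
  have hsum : ∑ m ∈ Finset.range (2 * k + 1), g m
      = bernoulli (2 * k) / ((2 * k)! : ℚ) - 2 * (k : ℚ) * (bernoulli (2 * k) / ((2 * k)! : ℚ)) := by
    rw [hg]
    simpa using h2
  rw [hsum] at h1
  have h3 : ∑ j ∈ Finset.range (k + 1), g (2 * j)
      = g 0 + (∑ m ∈ Finset.Ico 1 k, g (2 * m)) + g (2 * k) := by
    rw [Finset.sum_range_succ, Finset.range_eq_Ico,
      Finset.sum_eq_sum_Ico_succ_bot (by omega : 0 < k)]
  have hg0 : g 0 = bernoulli (2 * k) / ((2 * k)! : ℚ) := by simp [hg]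
  have hgk : g (2 * k) = bernoulli (2 * k) / ((2 * k)! : ℚ) := by simp [hg]
  rw [h3, hg0, hgk] at h1
  have : ∑ m ∈ Finset.Ico 1 k, g (2 * m)
      = -(2 * (k : ℚ) + 1) * (bernoulli (2 * k) / ((2 * k)! : ℚ)) := by linarith
  rw [← this]

open Real in
lemma zeta2 (m : ℕ) (hm : 1 ≤ m) :
    riemannZeta (2 * m) =
      (-1) ^ (m + 1) * (2 * (π : ℂ)) ^ (2 * m)
        * ((bernoulli (2 * m) / ((2 * m)! : ℚ) : ℚ) : ℂ) / 2 := by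
  rw [riemannZeta_two_mul_nat (by omega : m ≠ 0)]
  have h2 : (2 : ℂ) ^ (2 * m) = 2 ^ (2 * m - 1) * 2 := by
    rw [← pow_succ]; congr 1; omega
  rw [mul_pow, h2]
  push_cast
  ring

open Real in
theorem zeta_even_recurrence (k : ℕ) (hk : 2 ≤ k) :
    ((k : ℂ) + 1 / 2) * riemannZeta (2 * k) =
      ∑ m ∈ Finset.Ico 1 k, riemannZeta (2 * m) * riemannZeta (2 * (k - m)) := by
  have hterm : ∀ m ∈ Finset.Ico 1 k,
      riemannZeta (2 * m) * riemannZeta (2 * (k - m)) =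
        ((-1) ^ k * (2 * (π : ℂ)) ^ (2 * k) / 4)
          * ((bernoulli (2 * m) / ((2 * m)! : ℚ)
              * (bernoulli (2 * k - 2 * m) / ((2 * k - 2 * m)! : ℚ)) : ℚ) : ℂ) := by
    intro m hm
    obtain ⟨hm1, hm2⟩ := Finset.mem_Ico.mp hm
    have hkm : 2 * (k - m) = 2 * k - 2 * m := by omega
    have harg : 2 * ((k : ℂ) - m) = 2 * ((k - m : ℕ) : ℂ) := by
      rw [Nat.cast_sub hm2.le]
    rw [harg, zeta2 m hm1, zeta2 (k - m) (by omega), hkm]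
    have h1 : (-1 : ℂ) ^ (m + 1) * (-1) ^ (k - m + 1) = (-1) ^ k := by
      rw [← pow_add, show m + 1 + (k - m + 1) = k + 2 by omega, pow_add]
      norm_num
    have h2 : (2 * (π : ℂ)) ^ (2 * m) * (2 * (π : ℂ)) ^ (2 * k - 2 * m) = (2 * (π : ℂ)) ^ (2 * k) := by
      rw [← pow_add]; congr 1; omega
    calc (-1 : ℂ) ^ (m + 1) * (2 * (π : ℂ)) ^ (2 * m)
          * ((bernoulli (2 * m) / ((2 * m)! : ℚ) : ℚ) : ℂ) / 2
        * ((-1) ^ (k - m + 1) * (2 * (π : ℂ)) ^ (2 * k - 2 * m)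
          * ((bernoulli (2 * k - 2 * m) / ((2 * k - 2 * m)! : ℚ) : ℚ) : ℂ) / 2)
        = ((-1 : ℂ) ^ (m + 1) * (-1) ^ (k - m + 1))
            * ((2 * (π : ℂ)) ^ (2 * m) * (2 * (π : ℂ)) ^ (2 * k - 2 * m))
            * (((bernoulli (2 * m) / ((2 * m)! : ℚ) : ℚ) : ℂ)
              * ((bernoulli (2 * k - 2 * m) / ((2 * k - 2 * m)! : ℚ) : ℚ) : ℂ)) / 4 := by ring
      _ = _ := by rw [h1, h2]; push_cast; ring
  rw [Finset.sum_congr rfl hterm, ← Finset.mul_sum]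
  have hcast : ∑ m ∈ Finset.Ico 1 k,
      ((bernoulli (2 * m) / ((2 * m)! : ℚ)
        * (bernoulli (2 * k - 2 * m) / ((2 * k - 2 * m)! : ℚ)) : ℚ) : ℂ)
      = (((-(2 * (k : ℚ) + 1) * (bernoulli (2 * k) / ((2 * k)! : ℚ))) : ℚ) : ℂ) := by
    rw [← Rat.cast_sum, key k hk]
  rw [hcast, zeta2 k (by omega)]
  push_cast
  ring
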